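/- Let P be a convex polygon with k ≥ 3 vertices. If a leaf of a linear decision tree over ℝ² (each internal node tests the sign of an affine function, so each leaf corresponds to an intersection of open halfplanes) has its associated region equal to the interior of P, then the depth of that leaf is at least k. -/

import Mathlib

open Set Filter Topology

private lemma exists_triple' {α : Type*} [DecidableEq α] (s : Finset α) (h : 3 ≤ s.card) :
    ∃ a b c, a ∈ s ∧ b ∈ s ∧ c ∈ s ∧ a ≠ b ∧ a ≠ c ∧ b ≠ c := by
  obtain ⟨a, ha⟩ := Finset.card_pos.1 (show 0 < s.card by omega)
  have h2 : 2 ≤ (s.erase a).card := by rw [Finset.card_erase_of_mem ha]; omega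
  obtain ⟨b, hb⟩ := Finset.card_pos.1 (show 0 < (s.erase a).card by omega)
  have h1 : 1 ≤ ((s.erase a).erase b).card := by rw [Finset.card_erase_of_mem hb]; omega
  obtain ⟨c, hc⟩ := Finset.card_pos.1 (show 0 < ((s.erase a).erase b).card by omega)
  have hcb := (Finset.mem_erase.1 hc).1
  have hca := (Finset.mem_erase.1 (Finset.mem_erase.1 hc).2).1
  have hba := (Finset.mem_erase.1 hb).1
  exact ⟨a, b, c, ha, (Finset.mem_erase.1 hb).2,
    (Finset.mem_erase.1 (Finset.mem_erase.1 hc).2).2, (Ne.symm hba), (Ne.symm hca), (Ne.symm hcb)⟩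

private lemma two_le_countP' {α : Type*} {p : α → Bool} {l : List α} {a b : α}
    (ha : a ∈ l) (hb : b ∈ l) (hab : a ≠ b) (hpa : p a) (hpb : p b) : 2 ≤ l.countP p := by
  induction l with
  | nil => simp at ha
  | cons x t ih =>
    rw [List.countP_cons]
    rcases List.mem_cons.1 ha with rfl | ha'
    · have hbt : b ∈ t := by
        rcases List.mem_cons.1 hb with rfl | h
        · exact absurd rfl hab
        · exact h
      have h1 : 0 < t.countP p := List.countP_pos_iff.2 ⟨b, hbt, hpb⟩
      rw [if_pos hpa]; omega
    · rcases List.mem_cons.1 hb with rfl | hbt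
      · have h1 : 0 < t.countP p := List.countP_pos_iff.2 ⟨a, ha', hpa⟩
        rw [if_pos hpb]; omega
      · have := ih ha' hbt; omega

private lemma list_eventually' {α : Type*} (l : List α) (q : α → ℝ → Prop)
    (h : ∀ a ∈ l, ∀ᶠ t in 𝓝 (0:ℝ), q a t) : ∀ᶠ t in 𝓝 (0:ℝ), ∀ a ∈ l, q a t := by
  induction l with
  | nil => simp
  | cons x t ih =>
    have h1 := h x List.mem_cons_self
    have h2 := ih (fun a ha => h a (List.mem_cons_of_mem _ ha))
    filter_upwards [h1, h2] with s hs1 hs2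
    intro a ha
    rcases List.mem_cons.1 ha with rfl | ha'
    · exact hs1
    · exact hs2 a ha'

private lemma mem_hull_of_openSegment' {V : Finset (ℝ×ℝ)} {v a b : ℝ×ℝ}
    (hv : v ∈ V) (hVne : ((V.erase v : Finset (ℝ×ℝ)) : Set (ℝ×ℝ)).Nonempty)
    (ha : a ∈ convexHull ℝ (V : Set (ℝ×ℝ))) (hb : b ∈ convexHull ℝ (V : Set (ℝ×ℝ)))
    (hseg : v ∈ openSegment ℝ a b) (hav : a ≠ v) :
    v ∈ convexHull ℝ ((V.erase v : Finset (ℝ×ℝ)) : Set (ℝ×ℝ)) := by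
  classical
  set S : Set (ℝ×ℝ) := ((V.erase v : Finset (ℝ×ℝ)) : Set (ℝ×ℝ)) with hS
  have hins : insert v S = (V : Set (ℝ×ℝ)) := by
    rw [hS, Finset.coe_erase, Set.insert_diff_singleton, Set.insert_eq_self]
    exact hv
  rw [← hins, convexHull_insert hVne, mem_convexJoin] at ha hb
  obtain ⟨p, hp, a', ha', hsa⟩ := ha
  rw [Set.mem_singleton_iff] at hp; rw [hp] at hsa; clear hp
  obtain ⟨q, hq, b', hb', hsb⟩ := hb
  rw [Set.mem_singleton_iff] at hq; rw [hq] at hsb; clear hq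
  obtain ⟨s, s', hs0, hs'0, hss, hA⟩ := hsa
  obtain ⟨t, t', ht0, ht'0, htt, hB⟩ := hsb
  obtain ⟨c, c', hc0, hc'0, hcc, hV⟩ := hseg
  have hs'pos : 0 < s' := by
    rcases hs'0.lt_or_eq with h | h
    · exact h
    · exfalso
      apply hav
      rw [← hA, ← h]
      have hs1 : s = 1 := by linarith
      rw [hs1]; simp
  have hμ1 : c*s' + c'*t' = 1 - c*s - c'*t := by
    linear_combination c*hss + c'*htt + hcc
  have hμpos : 0 < c*s' + c'*t' := by nlinarith
  have key : (c*s' + c'*t') • v = (c*s')•a' + (c'*t')•b' := by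
    rw [hμ1]
    linear_combination (norm := module) -hV - c • hA - c' • hB
  have hv' : v = ((c*s' + c'*t')⁻¹*(c*s')) • a' + ((c*s' + c'*t')⁻¹*(c'*t')) • b' := by
    have h := congrArg (fun z => (c*s' + c'*t')⁻¹ • z) key
    simpa [smul_smul, inv_smul_smul₀ hμpos.ne'] using h
  rw [hv']
  refine (convex_convexHull ℝ S) ha' hb' ?_ ?_ ?_
  · exact mul_nonneg (inv_nonneg.2 hμpos.le) (mul_nonneg hc0.le hs'0)
  · exact mul_nonneg (inv_nonneg.2 hμpos.le) (mul_nonneg hc'0.le ht'0)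
  · rw [← mul_add, inv_mul_cancel₀ hμpos.ne']

private lemma affine_eval' (g : (ℝ × ℝ) →ᵃ[ℝ] ℝ) (v d : ℝ×ℝ) (t : ℝ) :
    g (v + t • d) = g v + t * g.linear d := by
  have h := g.map_vadd v (t • d)
  simp only [vadd_eq_add, map_smul, smul_eq_mul] at h
  rw [add_comm (t • d) v] at h
  rw [h]; ring

/-- If a leaf of a linear decision tree over ℝ² (whose root-to-leaf path is a list of affine
tests, each leaf region being the intersection of the corresponding open halfplanes) has its
region equal to the interior of a convex polygon with `k ≥ 3` vertices, then the depth of the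
leaf (the length of the path) is at least `k`. -/
theorem stmt11 (V : Finset (ℝ × ℝ)) (k : ℕ) (hk : 3 ≤ k) (hcard : V.card = k)
    (hvert : ∀ v ∈ V, v ∉ convexHull ℝ ((V.erase v : Finset (ℝ × ℝ)) : Set (ℝ × ℝ)))
    (path : List (((ℝ × ℝ) →ᵃ[ℝ] ℝ) × Bool))
    (hregion : (⋂ f ∈ path, if f.2 then {x : ℝ × ℝ | 0 < f.1 x} else {x : ℝ × ℝ | f.1 x < 0})
      = interior (convexHull ℝ (V : Set (ℝ × ℝ)))) :
    k ≤ path.length := by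
  classical
  set H : Set (ℝ×ℝ) := convexHull ℝ (V : Set (ℝ × ℝ)) with hHdef
  set l : List ((ℝ × ℝ) →ᵃ[ℝ] ℝ) := path.map (fun f => if f.2 then f.1 else -f.1) with hl
  -- membership characterization of the interior
  have hmem : ∀ x : ℝ×ℝ, x ∈ interior H ↔ ∀ g ∈ l, 0 < g x := by
    intro x
    rw [← hregion]
    constructor
    · intro h g hg
      obtain ⟨f, hf, rfl⟩ := List.mem_map.1 hg
      have hx := Set.mem_iInter₂.1 h f hf
      by_cases hb : f.2
      · simp only [if_pos hb] at hx ⊢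
        exact hx
      · simp only [if_neg hb] at hx ⊢
        simpa using hx
    · intro h
      rw [Set.mem_iInter₂]
      intro f hf
      by_cases hb : f.2
      · have := h f.1 (List.mem_map.2 ⟨f, hf, by rw [if_pos hb]⟩)
        simp only [if_pos hb]
        exact this
      · have := h (-f.1) (List.mem_map.2 ⟨f, hf, by rw [if_neg hb]⟩)
        simp only [if_neg hb]
        simpa using this
  -- no three vertices are collinear
  have hnc : ∀ a b c : ℝ×ℝ, a ∈ V → b ∈ V → c ∈ V → a ≠ b → a ≠ c → b ≠ c →
      ¬ Collinear ℝ ({a, b, c} : Set (ℝ×ℝ)) := by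
    intro a b c ha hb hc hab hac hbc hcol
    rcases hcol.wbtw_or_wbtw_or_wbtw with h | h | h
    · refine hvert b hb ?_
      refine segment_subset_convexHull ?_ ?_ h.mem_segment
      · exact Finset.mem_coe.2 (Finset.mem_erase.2 ⟨hab, ha⟩)
      · exact Finset.mem_coe.2 (Finset.mem_erase.2 ⟨hbc.symm, hc⟩)
    · refine hvert c hc ?_
      refine segment_subset_convexHull ?_ ?_ h.mem_segment
      · exact Finset.mem_coe.2 (Finset.mem_erase.2 ⟨hbc, hb⟩)
      · exact Finset.mem_coe.2 (Finset.mem_erase.2 ⟨hac, ha⟩)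
    · refine hvert a ha ?_
      refine segment_subset_convexHull ?_ ?_ h.mem_segment
      · exact Finset.mem_coe.2 (Finset.mem_erase.2 ⟨hac.symm, hc⟩)
      · exact Finset.mem_coe.2 (Finset.mem_erase.2 ⟨hab.symm, hb⟩)
  -- the affine span of the vertex set is everything
  have hspan : affineSpan ℝ (V : Set (ℝ×ℝ)) = ⊤ := by
    by_contra htop
    have hVne : (V : Set (ℝ×ℝ)).Nonempty := by
      rw [Finset.coe_nonempty, ← Finset.card_pos]; omega
    have hvs : vectorSpan ℝ (V : Set (ℝ×ℝ)) ≠ ⊤ := fun h => htop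
      ((AffineSubspace.affineSpan_eq_top_iff_vectorSpan_eq_top_of_nonempty ℝ (ℝ×ℝ) (ℝ×ℝ) hVne).2 h)
    have hfr : Module.finrank ℝ (vectorSpan ℝ (V : Set (ℝ×ℝ))) ≤ 1 := by
      by_contra hgt
      have hle := Submodule.finrank_le (vectorSpan ℝ (V : Set (ℝ×ℝ)))
      have h22 : Module.finrank ℝ (ℝ×ℝ) = 2 := by simp
      have h2 : Module.finrank ℝ (vectorSpan ℝ (V : Set (ℝ×ℝ))) = 2 := by omega
      exact hvs (Submodule.eq_top_of_finrank_eq (by rw [h2, h22]))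
    have hcol : Collinear ℝ (V : Set (ℝ×ℝ)) := collinear_iff_finrank_le_one.2 hfr
    obtain ⟨a, b, c, ha, hb, hc, hab, hac, hbc⟩ := exists_triple' V (by omega)
    refine hnc a b c ha hb hc hab hac hbc (hcol.subset ?_)
    intro x hx
    rcases hx with rfl | hx
    · exact ha
    rcases hx with rfl | hx
    · exact hb
    rw [Set.mem_singleton_iff] at hx
    subst hx; exact hc
  have hHconv : Convex ℝ H := convex_convexHull ℝ _
  have hint : (interior H).Nonempty := by
    rw [hHconv.interior_nonempty_iff_affineSpan_eq_top, hHdef, affineSpan_convexHull]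
    exact hspan
  have hHcl : IsClosed H := (V.finite_toSet.isCompact_convexHull (𝕜 := ℝ)).isClosed
  -- H is the intersection of the closed halfplanes
  have hsub1 : ∀ x ∈ H, ∀ g ∈ l, 0 ≤ g x := by
    have hci : H ⊆ closure (interior H) := by
      intro x hx
      obtain ⟨y, hy⟩ := hint
      have hseg := hHconv.openSegment_closure_interior_subset_interior (subset_closure hx) hy
      have hxseg : x ∈ segment ℝ x y := left_mem_segment ℝ x y
      rw [← closure_openSegment] at hxseg
      exact closure_mono hseg hxseg
    intro x hx g hg
    have h2 : IsClosed {z : ℝ×ℝ | 0 ≤ g z} :=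
      isClosed_le continuous_const g.continuous_of_finiteDimensional
    have h3 : interior H ⊆ {z : ℝ×ℝ | 0 ≤ g z} :=
      fun z hz => ((hmem z).1 hz g hg).le
    have h4 := closure_mono h3 (hci hx)
    rwa [h2.closure_eq] at h4
  have hsub2 : ∀ x : ℝ×ℝ, (∀ g ∈ l, 0 ≤ g x) → x ∈ H := by
    intro x hx
    obtain ⟨y, hy⟩ := hint
    have hmemt : ∀ t ∈ Ioo (0:ℝ) 1, x + t • (y - x) ∈ interior H := by
      intro t ht
      rw [hmem]
      intro g hg
      have hgx : 0 ≤ g x := hx g hg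
      have hgy : 0 < g y := (hmem y).1 hy g hg
      have heval : g (x + t • (y - x)) = g x + t * (g y - g x) := by
        rw [affine_eval' g x (y - x) t]
        have h5 : g.linear (y - x) = g y - g x := by
          have h6 := g.linearMap_vsub y x
          simpa using h6
        rw [h5]
      rw [heval]; nlinarith [ht.1, ht.2]
    have hcont : Continuous (fun t : ℝ => x + t • (y - x)) := by fun_prop
    have htend : Tendsto (fun t : ℝ => x + t • (y - x)) (𝓝[Ioo (0:ℝ) 1] 0) (𝓝 x) := by
      have h := (hcont.tendsto 0).mono_left (nhdsWithin_le_nhds (s := Ioo (0:ℝ) 1))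
      simpa using h
    have hnb : (𝓝[Ioo (0:ℝ) 1] (0:ℝ)).NeBot := left_nhdsWithin_Ioo_neBot (by norm_num)
    have hcl : x ∈ closure H :=
      mem_closure_of_tendsto htend
        (eventually_nhdsWithin_of_forall (fun t ht => interior_subset (hmemt t ht)))
    rwa [hHcl.closure_eq] at hcl
  -- every vertex lies in H and hence all g are nonneg there
  have hVH : ∀ v ∈ V, (v : ℝ×ℝ) ∈ H := fun v hv => subset_convexHull ℝ _ (Finset.mem_coe.2 hv)
  -- a `g` vanishing at a vertex has nonzero linear part
  have hlin0 : ∀ g ∈ l, ∀ v : ℝ×ℝ, g v = 0 → g.linear ≠ 0 := by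
    intro g hg v hgv hL
    obtain ⟨y, hy⟩ := hint
    have hgy : 0 < g y := (hmem y).1 hy g hg
    have h6 := g.linearMap_vsub y v
    rw [hL] at h6
    simp only [LinearMap.zero_apply] at h6
    have : g y = g v := by
      have h7 : (0:ℝ) = g y - g v := by simpa using h6
      linarith
    rw [this, hgv] at hgy
    exact lt_irrefl _ hgy
  -- at least two tests vanish at each vertex
  have hL1 : ∀ v ∈ V, 2 ≤ l.countP (fun g => decide (g v = 0)) := by
    intro v hv
    by_contra hcnt
    push_neg at hcnt
    have hcnt' : l.countP (fun g => decide (g v = 0)) ≤ 1 := by omega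
    -- find a direction killed by the (at most one) vanishing test
    obtain ⟨d, hd0, hdker⟩ : ∃ d : ℝ×ℝ, d ≠ 0 ∧ ∀ g ∈ l, g v = 0 → g.linear d = 0 := by
      by_cases hex : ∃ g₀ ∈ l, g₀ v = 0
      · obtain ⟨g₀, hg₀, hg₀v⟩ := hex
        refine ⟨(g₀.linear (0,1), -(g₀.linear (1,0))), ?_, ?_⟩
        · intro h
          have h1 : g₀.linear ((0:ℝ),(1:ℝ)) = 0 := congrArg Prod.fst h
          have h2 : g₀.linear ((1:ℝ),(0:ℝ)) = 0 := by
            have := congrArg Prod.snd h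
            simpa using this
          apply hlin0 g₀ hg₀ v hg₀v
          apply LinearMap.ext
          intro z
          have hz : z = z.1 • ((1:ℝ),(0:ℝ)) + z.2 • ((0:ℝ),(1:ℝ)) := by
            simp [Prod.ext_iff]
          rw [hz, map_add, map_smul, map_smul, h1, h2]
          simp
        · intro g hg hgv
          have hgeq : g = g₀ := by
            by_contra hne
            have h2 := two_le_countP' (p := fun g' => decide (g' v = 0)) hg hg₀ hne
              (by simpa using hgv) (by simpa using hg₀v)
            omega
          subst hgeq
          have hrw : ((g.linear ((0:ℝ),(1:ℝ)), -(g.linear ((1:ℝ),(0:ℝ)))) : ℝ×ℝ)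
              = (g.linear ((0:ℝ),(1:ℝ))) • ((1:ℝ),(0:ℝ)) + (-(g.linear ((1:ℝ),(0:ℝ)))) • ((0:ℝ),(1:ℝ)) := by
            simp [Prod.ext_iff]
          rw [hrw, map_add, map_smul, map_smul]
          simp [mul_comm]
      · push_neg at hex
        exact ⟨(1,0), by simp [Prod.ext_iff], fun g hg hgv => absurd hgv (hex g hg)⟩
    -- eventually all non-vanishing tests stay positive along direction d
    have hev : ∀ᶠ t in 𝓝 (0:ℝ), ∀ g ∈ l, g v ≠ 0 → 0 < g (v + t • d) := by
      apply list_eventually'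
      intro g hg
      by_cases hgv : g v = 0
      · filter_upwards with t ht
        exact absurd hgv ht
      · have hgpos : 0 < g v := lt_of_le_of_ne (hsub1 v (hVH v hv) g hg) (Ne.symm hgv)
        have hc : Continuous (fun t : ℝ => g (v + t • d)) :=
          g.continuous_of_finiteDimensional.comp (by fun_prop)
        have h0 : 0 < (fun t : ℝ => g (v + t • d)) 0 := by simpa using hgpos
        have hev1 := (hc.tendsto 0).eventually (eventually_gt_nhds h0)
        filter_upwards [hev1] with t ht _
        exact ht
    obtain ⟨ε, hε, hevε⟩ := Metric.eventually_nhds_iff.1 hev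
    have hdista : dist (ε/2) (0:ℝ) < ε := by
      rw [Real.dist_eq, sub_zero, abs_of_pos (by linarith)]; linarith
    have hdistb : dist (-(ε/2)) (0:ℝ) < ε := by
      rw [Real.dist_eq, sub_zero, abs_of_neg (by linarith)]; linarith
    have hainH : v + (ε/2) • d ∈ H := by
      apply hsub2
      intro g hg
      by_cases hgv : g v = 0
      · rw [affine_eval', hdker g hg hgv, hgv]; simp
      · exact (hevε hdista g hg hgv).le
    have hbinH : v + (-(ε/2)) • d ∈ H := by
      apply hsub2
      intro g hg
      by_cases hgv : g v = 0
      · rw [affine_eval', hdker g hg hgv, hgv]; simp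
      · exact (hevε hdistb g hg hgv).le
    have haneq : v + (ε/2) • d ≠ v := by
      intro h
      rw [add_eq_left] at h
      exact smul_ne_zero (by positivity : (ε/2:ℝ) ≠ 0) hd0 h
    have hvseg : v ∈ openSegment ℝ (v + (ε/2) • d) (v + (-(ε/2)) • d) := by
      refine ⟨1/2, 1/2, by norm_num, by norm_num, by norm_num, ?_⟩
      module
    have hVne' : ((V.erase v : Finset (ℝ×ℝ)) : Set (ℝ×ℝ)).Nonempty := by
      rw [Finset.coe_nonempty, ← Finset.card_pos, Finset.card_erase_of_mem hv]
      omega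
    exact hvert v hv (mem_hull_of_openSegment' hv hVne' hainH hbinH hvseg haneq)
  -- each test vanishes on at most two vertices
  have hL2 : ∀ g ∈ l, (V.filter (fun v => g v = 0)).card ≤ 2 := by
    intro g hg
    by_contra hgt
    push_neg at hgt
    obtain ⟨a, b, c, ha, hb, hc, hab, hac, hbc⟩ :=
      exists_triple' (V.filter (fun v => g v = 0)) (by omega)
    rw [Finset.mem_filter] at ha hb hc
    have hlin : g.linear ≠ 0 := hlin0 g hg a ha.2
    apply hnc a b c ha.1 hb.1 hc.1 hab hac hbc
    have hker : vectorSpan ℝ ({a, b, c} : Set (ℝ×ℝ)) ≤ LinearMap.ker g.linear := by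
      rw [vectorSpan_def]
      apply Submodule.span_le.2
      rintro z ⟨x, hx, y, hy, rfl⟩
      have hx0 : g x = 0 := by
        rcases hx with rfl | hx
        · exact ha.2
        rcases hx with rfl | hx
        · exact hb.2
        · rw [Set.mem_singleton_iff] at hx; subst hx; exact hc.2
      have hy0 : g y = 0 := by
        rcases hy with rfl | hy
        · exact ha.2
        rcases hy with rfl | hy
        · exact hb.2
        · rw [Set.mem_singleton_iff] at hy; subst hy; exact hc.2
      simp only [SetLike.mem_coe, LinearMap.mem_ker]
      have h6 := g.linearMap_vsub x y
      rw [hx0, hy0] at h6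
      simpa using h6
    have hkle : Module.finrank ℝ (LinearMap.ker g.linear) ≤ 1 := by
      by_contra hh
      have hle2 := Submodule.finrank_le (LinearMap.ker g.linear)
      have h22 : Module.finrank ℝ (ℝ×ℝ) = 2 := by simp
      have hk2 : Module.finrank ℝ (LinearMap.ker g.linear) = 2 := by omega
      have htop : LinearMap.ker g.linear = ⊤ :=
        Submodule.eq_top_of_finrank_eq (by rw [hk2, h22])
      exact hlin (LinearMap.ker_eq_top.1 htop)
    exact collinear_iff_finrank_le_one.2 (le_trans (Submodule.finrank_mono hker) hkle)
  -- double counting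
  have hsum : ∀ L : List ((ℝ×ℝ) →ᵃ[ℝ] ℝ),
      (∑ v ∈ V, L.countP (fun g => decide (g v = 0)))
        = (L.map (fun g => (V.filter (fun v => g v = 0)).card)).sum := by
    intro L
    induction L with
    | nil => simp
    | cons g t ih =>
      simp only [List.map_cons, List.sum_cons]
      have hstep : ∀ v : ℝ×ℝ, (g :: t).countP (fun g' => decide (g' v = 0))
          = t.countP (fun g' => decide (g' v = 0)) + (if g v = 0 then 1 else 0) := by
        intro v
        rw [List.countP_cons]
        congr 1
        by_cases hgv : g v = 0
        · rw [if_pos hgv, if_pos (by simp [hgv])]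
        · rw [if_neg hgv, if_neg (by simp [hgv])]
      calc (∑ v ∈ V, (g :: t).countP (fun g' => decide (g' v = 0)))
          = ∑ v ∈ V, (t.countP (fun g' => decide (g' v = 0)) + (if g v = 0 then 1 else 0)) := by
            exact Finset.sum_congr rfl (fun v _ => hstep v)
        _ = (∑ v ∈ V, t.countP (fun g' => decide (g' v = 0)))
              + ∑ v ∈ V, (if g v = 0 then 1 else 0) := Finset.sum_add_distrib
        _ = (V.filter (fun v => g v = 0)).card
              + (t.map (fun g' => (V.filter (fun v => g' v = 0)).card)).sum := by
            rw [ih, Finset.card_filter]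
            ring
  have hbound : (l.map (fun g => (V.filter (fun v => g v = 0)).card)).sum ≤ l.length * 2 := by
    have h := List.sum_le_card_nsmul (l.map (fun g => (V.filter (fun v => g v = 0)).card)) 2 ?_
    · simpa [smul_eq_mul] using h
    · intro x hx
      obtain ⟨g, hg, rfl⟩ := List.mem_map.1 hx
      exact hL2 g hg
  have h2k : 2 * k ≤ 2 * l.length := by
    have hsum1 : ∑ v ∈ V, 2 ≤ ∑ v ∈ V, l.countP (fun g => decide (g v = 0)) :=
      Finset.sum_le_sum (fun v hv => hL1 v hv)
    have hconst : (∑ _v ∈ V, 2) = 2 * k := by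
      rw [Finset.sum_const, hcard]; ring
    have := hsum l
    omega
  have hlen : l.length = path.length := List.length_map _
  omega
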